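/- The football construction. Let n ≥ 1 and let μ_0,…,μ_{n−1} be probability vectors on {0,1,…,n−1} (μ_i : Fin n → ℝ, nonnegative, summing to 1) such that (i) μ_i has mean x i, i.e. ∑_{j} j·μ_i(j) = x i, and (ii) ∑_{i} μ_i(j) = 1 for every j. Then for every i, ∑_{j ≠ i} χ(μ_i, μ_j) = x i. Consequently the matrix p with p i j = χ(μ_i, μ_j) for i ≠ j is a win-probability matrix with mean score sequence x. -/
import Mathlib

open Finset

noncomputable def chi {n : ℕ} (μ ν : Fin n → ℝ) : ℝ :=
  (∑ a : Fin n, ∑ b ∈ Finset.univ.filter (fun b : Fin n => (b : ℕ) < (a : ℕ)), μ a * ν b)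
    + (1 / 2) * ∑ a : Fin n, μ a * ν a

lemma filt_eq_Iio {n : ℕ} (a : Fin n) :
    Finset.univ.filter (fun b : Fin n => (b : ℕ) < (a : ℕ)) = Finset.Iio a := by
  ext b; simp only [Finset.mem_filter, Finset.mem_univ, true_and, Finset.mem_Iio, Fin.lt_def]

lemma chi_add {n : ℕ} (μ ν : Fin n → ℝ) (hμ : ∑ j, μ j = 1) (hν : ∑ j, ν j = 1) :
    chi μ ν + chi ν μ = 1 := by
  have swap : (∑ a : Fin n, ∑ b ∈ Finset.univ.filter (fun b : Fin n => (b : ℕ) < (a : ℕ)), ν a * μ b)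
      = ∑ a : Fin n, ∑ b ∈ Finset.univ.filter (fun b : Fin n => (a : ℕ) < (b : ℕ)), μ a * ν b := by
    rw [Finset.sum_comm' (s := (Finset.univ : Finset (Fin n)))
      (t := fun a : Fin n => Finset.univ.filter (fun b : Fin n => (b : ℕ) < (a : ℕ)))
      (t' := (Finset.univ : Finset (Fin n)))
      (s' := fun b : Fin n => Finset.univ.filter (fun a : Fin n => (b : ℕ) < (a : ℕ)))
      (f := fun a b => ν a * μ b)]
    · exact Finset.sum_congr rfl fun a _ => Finset.sum_congr rfl fun b hb => mul_comm _ _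
    · intro x y; simp
  have split : ∀ a : Fin n, (∑ b, μ a * ν b)
      = (∑ b ∈ Finset.univ.filter (fun b : Fin n => (b : ℕ) < (a : ℕ)), μ a * ν b)
        + ((∑ b ∈ Finset.univ.filter (fun b : Fin n => (a : ℕ) < (b : ℕ)), μ a * ν b)
          + μ a * ν a) := by
    intro a
    rw [← Finset.sum_filter_add_sum_filter_not Finset.univ (fun b : Fin n => (b : ℕ) < (a : ℕ))]
    congr 1
    rw [← Finset.sum_filter_add_sum_filter_not
      (Finset.univ.filter (fun b : Fin n => ¬ (b : ℕ) < (a : ℕ))) (fun b : Fin n => (a : ℕ) < (b : ℕ))]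
    congr 1
    · apply Finset.sum_congr _ fun _ _ => rfl
      ext b; simp; omega
    · have : (Finset.univ.filter (fun b : Fin n => ¬ (b : ℕ) < (a : ℕ))).filter
          (fun b : Fin n => ¬ (a : ℕ) < (b : ℕ)) = {a} := by
        ext b; simp [Fin.ext_iff]; omega
      rw [this, Finset.sum_singleton]
  have full : ∑ a : Fin n, ∑ b, μ a * ν b = 1 := by
    rw [← Finset.sum_mul_sum, hμ, hν, one_mul]
  unfold chi
  rw [swap]
  have := Finset.sum_congr rfl (fun a (_ : a ∈ Finset.univ) => split a)
  rw [Finset.sum_add_distrib, Finset.sum_add_distrib] at this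
  rw [this] at full
  have hsym : ∑ a : Fin n, ν a * μ a = ∑ a : Fin n, μ a * ν a :=
    Finset.sum_congr rfl fun a _ => mul_comm _ _
  rw [hsym]
  linarith

lemma chi_nonneg {n : ℕ} (μ ν : Fin n → ℝ) (hμ : ∀ j, 0 ≤ μ j) (hν : ∀ j, 0 ≤ ν j) :
    0 ≤ chi μ ν := by
  unfold chi
  have h1 : (0:ℝ) ≤ ∑ a : Fin n, ∑ b ∈ Finset.univ.filter (fun b : Fin n => (b : ℕ) < (a : ℕ)), μ a * ν b :=
    Finset.sum_nonneg fun a _ => Finset.sum_nonneg fun b _ => mul_nonneg (hμ a) (hν b)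
  have h2 : (0:ℝ) ≤ ∑ a : Fin n, μ a * ν a :=
    Finset.sum_nonneg fun a _ => mul_nonneg (hμ a) (hν a)
  linarith

/-- The football construction: given probability vectors `μ i` on `{0,…,n-1}`
with `μ i` of mean `x i` and with all column sums equal to `1`, the matrix
`p i j = chi (μ i) (μ j)` is a win-probability matrix with mean score
sequence `x`. -/
theorem football_construction {n : ℕ} (hn : 1 ≤ n)
    (μ : Fin n → Fin n → ℝ) (x : Fin n → ℝ)
    (hnonneg : ∀ i j, 0 ≤ μ i j)
    (hrow : ∀ i, ∑ j : Fin n, μ i j = 1)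
    (hmean : ∀ i, ∑ j : Fin n, ((j : ℕ) : ℝ) * μ i j = x i)
    (hcol : ∀ j, ∑ i : Fin n, μ i j = 1) :
    (∀ i, ∑ j ∈ Finset.univ.filter (fun j => j ≠ i), chi (μ i) (μ j) = x i) ∧
    (∀ i j, 0 ≤ chi (μ i) (μ j) ∧ chi (μ i) (μ j) ≤ 1) ∧
    (∀ i j, i ≠ j → chi (μ i) (μ j) + chi (μ j) (μ i) = 1) := by
  have hdiag : ∀ i, chi (μ i) (μ i) = 1/2 := by
    intro i
    have := chi_add (μ i) (μ i) (hrow i) (hrow i)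
    linarith
  have htot : ∀ i, ∑ j, chi (μ i) (μ j) = x i + 1/2 := by
    intro i
    have e1 : ∑ j, chi (μ i) (μ j)
        = (∑ j, ∑ a : Fin n, ∑ b ∈ Finset.univ.filter (fun b : Fin n => (b : ℕ) < (a : ℕ)), μ i a * μ j b)
          + (1/2) * ∑ j, ∑ a : Fin n, μ i a * μ j a := by
      unfold chi; rw [Finset.sum_add_distrib, Finset.mul_sum]
    rw [e1]
    have e2 : (∑ j, ∑ a : Fin n, ∑ b ∈ Finset.univ.filter (fun b : Fin n => (b : ℕ) < (a : ℕ)), μ i a * μ j b)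
        = ∑ a : Fin n, ((a : ℕ) : ℝ) * μ i a := by
      rw [Finset.sum_comm]
      apply Finset.sum_congr rfl; intro a _
      rw [Finset.sum_comm]
      have : ∀ b ∈ Finset.univ.filter (fun b : Fin n => (b : ℕ) < (a : ℕ)),
          ∑ j, μ i a * μ j b = μ i a := by
        intro b _
        rw [← Finset.mul_sum, hcol b, mul_one]
      rw [Finset.sum_congr rfl this, Finset.sum_const, filt_eq_Iio, Fin.card_Iio]
      push_cast; ring
    have e3 : (∑ j, ∑ a : Fin n, μ i a * μ j a) = 1 := by
      rw [Finset.sum_comm]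
      have : ∀ a ∈ (Finset.univ : Finset (Fin n)), ∑ j, μ i a * μ j a = μ i a := by
        intro a _; rw [← Finset.mul_sum, hcol a, mul_one]
      rw [Finset.sum_congr rfl this, hrow i]
    rw [e2, e3]
    have : ∑ a : Fin n, ((a : ℕ) : ℝ) * μ i a = x i := hmean i
    linarith
  refine ⟨?_, ?_, ?_⟩
  · intro i
    have hfe : Finset.univ.filter (fun j : Fin n => j ≠ i) = Finset.univ.erase i :=
      Finset.filter_ne' _ _
    have key : chi (μ i) (μ i) + ∑ j ∈ Finset.univ.erase i, chi (μ i) (μ j)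
        = ∑ j, chi (μ i) (μ j) :=
      Finset.add_sum_erase Finset.univ (fun j => chi (μ i) (μ j)) (Finset.mem_univ i)
    rw [hfe]
    have h2 := htot i
    rw [hdiag i] at key
    linarith
  · intro i j
    constructor
    · exact chi_nonneg _ _ (hnonneg i) (hnonneg j)
    · have h1 := chi_add (μ i) (μ j) (hrow i) (hrow j)
      have h2 := chi_nonneg (μ j) (μ i) (hnonneg j) (hnonneg i)
      linarith
  · intro i j _
    exact chi_add (μ i) (μ j) (hrow i) (hrow j)
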